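/- Let E(0,s) = (4s/(s²-16))·[[s+4, 4],[(s+4)(s-2), 3s-4]]. Define M(s₁,s₂) := E(0,s₁) + E(s₁,s₂) + E(s₁,s₂)·E(0,s₁) - E(0,s₁+s₂), for s₁, s₂ small (so all denominators are nonzero). Then M(s₁,s₂) = (4 s₁s₂(s₁+s₂) / ((s₁²-16)((s₁+s₂)²-16)((2s₁+s₂)²-16))) · N(s₁,s₂), where N has entries N₁₁ = (s₁+4)(s₁+s₂+4)(6s₁+5s₂-12), N₁₂ = 4(5s₂²+13s₁s₂+9s₁²-48), N₂₁ = 2(s₁+4)(s₁+s₂+4)(4-6s₁+2s₁²-7s₂+4s₁s₂+2s₂²), N₂₂ = 192-128s₁-36s₁²+26s₁³-160s₂-52s₁s₂+65s₁²s₂-20s₂²+55s₁s₂²+16s₂³. -/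

import Mathlib

noncomputable def Emat (v s : ℝ) : Matrix (Fin 2) (Fin 2) ℝ :=
  (4 * s / ((2 * v + s) ^ 2 - 16)) •
    !![s + 4 - 2 * v, 4; (s + 4) * (s - 2) + 4 * v, 3 * s - 4 + 2 * v]

set_option maxHeartbeats 2000000 in
theorem stmt10 (s₁ s₂ : ℝ) (h₁ : |s₁| < 1) (h₂ : |s₂| < 1) :
    Emat 0 s₁ + Emat s₁ s₂ + Emat s₁ s₂ * Emat 0 s₁ - Emat 0 (s₁ + s₂) =
      (4 * s₁ * s₂ * (s₁ + s₂) /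
          ((s₁ ^ 2 - 16) * ((s₁ + s₂) ^ 2 - 16) * ((2 * s₁ + s₂) ^ 2 - 16))) •
        !![(s₁ + 4) * (s₁ + s₂ + 4) * (6 * s₁ + 5 * s₂ - 12),
           4 * (5 * s₂ ^ 2 + 13 * s₁ * s₂ + 9 * s₁ ^ 2 - 48);
           2 * (s₁ + 4) * (s₁ + s₂ + 4) *
             (4 - 6 * s₁ + 2 * s₁ ^ 2 - 7 * s₂ + 4 * s₁ * s₂ + 2 * s₂ ^ 2),
           192 - 128 * s₁ - 36 * s₁ ^ 2 + 26 * s₁ ^ 3 - 160 * s₂ - 52 * s₁ * s₂ +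
             65 * s₁ ^ 2 * s₂ - 20 * s₂ ^ 2 + 55 * s₁ * s₂ ^ 2 + 16 * s₂ ^ 3] := by
  rw [abs_lt] at h₁ h₂
  have d1 : s₁ ^ 2 - 16 ≠ 0 := by nlinarith [h₁.1, h₁.2]
  have d2 : (s₁ + s₂) ^ 2 - 16 ≠ 0 := by nlinarith [h₁.1, h₁.2, h₂.1, h₂.2]
  have d3 : (2 * s₁ + s₂) ^ 2 - 16 ≠ 0 := by nlinarith [h₁.1, h₁.2, h₂.1, h₂.2]
  have d1' : (2 * 0 + s₁) ^ 2 - 16 ≠ 0 := by simpa using d1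
  have d3' : (2 * s₁ + s₂) ^ 2 - 16 ≠ 0 := d3
  have d2' : (2 * 0 + (s₁ + s₂)) ^ 2 - 16 ≠ 0 := by simpa using d2
  have d4 : (s₁ * 2 + s₂) ^ 2 - 16 ≠ 0 := by rw [mul_comm]; exact d3
  ext i j
  fin_cases i <;> fin_cases j <;>
    simp [Emat, Matrix.mul_apply, Fin.sum_univ_two] <;>
    field_simp <;> ring
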